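/- arXiv:2404.13371 — 4 statements merged into one kernel-verified Lean document; each statement's English description precedes it below -/
import Mathlib

section
/- Let X(0), ..., X(n-1) be i.i.d. random variables, each uniformly distributed on [-1, X_max] with X_max > 0, and define 𝒳_n := (∏_{k=0}^{n-1} (1 + X(k))) - 1. Then for every z with -1 < z < (1 + X_max)^n - 1, the cumulative distribution function of 𝒳_n satisfies P(𝒳_n ≤ z) = ((1+z)/(1+X_max)^n) · ∑_{k=0}^{n-1} (1/k!) (log((1+X_max)^n/(1+z)))^k, and P(𝒳_n ≤ z) = 0 for z ≤ -1. -/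
open MeasureTheory Real Finset


lemma iIndepFun_ae_congr {Ω ι : Type*} [MeasurableSpace Ω] {μ : Measure Ω}
    {β : Type*} [mβ : MeasurableSpace β] {f g : ι → Ω → β}
    (hf : ProbabilityTheory.iIndepFun f μ) (h : ∀ i, f i =ᵐ[μ] g i) :
    ProbabilityTheory.iIndepFun g μ := by
  rw [ProbabilityTheory.iIndepFun_iff_measure_inter_preimage_eq_mul] at hf ⊢
  intro S sets H
  have hae : ∀ᵐ ω ∂μ, ∀ i ∈ S, f i ω = g i ω := by
    exact (MeasureTheory.ae_ball_iff S.countable_toSet).2 fun i _ => h i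
  have h1 : μ (⋂ i ∈ S, g i ⁻¹' sets i) = μ (⋂ i ∈ S, f i ⁻¹' sets i) := by
    apply measure_congr
    rw [Filter.eventuallyEq_set]
    filter_upwards [hae] with ω hω
    simp only [Set.mem_iInter, Set.mem_preimage]
    constructor
    · intro hh i hi; rw [hω i hi]; exact hh i hi
    · intro hh i hi; rw [← hω i hi]; exact hh i hi
  have h2 : ∀ i ∈ S, μ (g i ⁻¹' sets i) = μ (f i ⁻¹' sets i) := by
    intro i hi
    apply measure_congr
    rw [Filter.eventuallyEq_set]
    filter_upwards [h i] with ω hω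
    simp [Set.mem_preimage, hω]
  rw [h1, hf S H, Finset.prod_congr rfl h2]




lemma ftc_piece (c t : ℝ) (hc : 1 < c) (m : ℕ) (ht : 0 < t) (ht2 : t < c ^ (m + 1)) :
    ∫ u in (t / c ^ m - 1)..(c - 1),
        (t / (c ^ m * (1 + u))) * ∑ k ∈ Finset.range m,
          (1 / (Nat.factorial k : ℝ)) * (Real.log (c ^ m * (1 + u) / t)) ^ k
      = (t / c ^ m) * ∑ k ∈ Finset.range m,
          (1 / (Nat.factorial (k + 1) : ℝ)) * (Real.log (c ^ (m + 1) / t)) ^ (k + 1) := by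
  have hc0 : (0:ℝ) < c := lt_trans one_pos hc
  have hcm : (0:ℝ) < c ^ m := pow_pos hc0 m
  have hcm1 : (0:ℝ) < c ^ (m + 1) := pow_pos hc0 (m + 1)
  set a := t / c ^ m - 1 with ha
  have htcm : t / c ^ m < c := by
    rw [div_lt_iff₀ hcm]
    calc t < c ^ (m+1) := ht2
    _ = c * c ^ m := by ring
  have hab : a ≤ c - 1 := by rw [ha]; linarith
  have hpos : ∀ u ∈ Set.uIcc a (c - 1), 0 < 1 + u := by
    intro u hu
    rw [Set.uIcc_of_le hab] at hu
    have := hu.1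
    have h1 : 0 < t / c ^ m := div_pos ht hcm
    simp only [ha] at this
    linarith
  set F := fun u : ℝ => (t / c ^ m) * ∑ k ∈ Finset.range m,
      (1 / (Nat.factorial (k + 1) : ℝ)) * (Real.log (c ^ m * (1 + u) / t)) ^ (k + 1) with hF
  have hderiv : ∀ u ∈ Set.uIcc a (c - 1), HasDerivAt F
      ((t / (c ^ m * (1 + u))) * ∑ k ∈ Finset.range m,
        (1 / (Nat.factorial k : ℝ)) * (Real.log (c ^ m * (1 + u) / t)) ^ k) u := by
    intro u hu
    have h1u : 0 < 1 + u := hpos u hu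
    have harg : 0 < c ^ m * (1 + u) / t := div_pos (mul_pos hcm h1u) ht
    have hin : HasDerivAt (fun u : ℝ => c ^ m * (1 + u) / t) (c ^ m * 1 / t) u :=
      (((hasDerivAt_id u).const_add 1).const_mul (c ^ m)).div_const t
    have hlog : HasDerivAt (fun u : ℝ => Real.log (c ^ m * (1 + u) / t))
        (1 / (1 + u)) u := by
      have := hin.log (ne_of_gt harg)
      convert this using 1
      field_simp
    have hterm : ∀ k ∈ Finset.range m, HasDerivAt
        (fun u : ℝ => (1 / (Nat.factorial (k + 1) : ℝ)) * (Real.log (c ^ m * (1 + u) / t)) ^ (k + 1))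
        ((1 / (Nat.factorial k : ℝ)) * (Real.log (c ^ m * (1 + u) / t)) ^ k * (1 / (1 + u))) u := by
      intro k _
      have := (hlog.pow (k + 1)).const_mul (1 / (Nat.factorial (k + 1) : ℝ))
      refine this.congr_deriv ?_
      have hfac : (Nat.factorial (k+1) : ℝ) = (k+1) * Nat.factorial k := by
        rw [Nat.factorial_succ]; push_cast; ring
      rw [hfac, Nat.add_sub_cancel]
      push_cast
      have hk0 : (Nat.factorial k : ℝ) ≠ 0 := Nat.cast_ne_zero.2 (Nat.factorial_ne_zero k)
      field_simp
    have hsum := HasDerivAt.fun_sum hterm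
    have := hsum.const_mul (t / c ^ m)
    refine this.congr_deriv ?_
    rw [Finset.mul_sum, Finset.mul_sum]
    apply Finset.sum_congr rfl
    intro k _
    have : t / (c ^ m * (1 + u)) = (t / c ^ m) * (1 / (1 + u)) := by
      field_simp
    rw [this]; ring
  have hcont : ContinuousOn (fun u : ℝ => (t / (c ^ m * (1 + u))) * ∑ k ∈ Finset.range m,
      (1 / (Nat.factorial k : ℝ)) * (Real.log (c ^ m * (1 + u) / t)) ^ k) (Set.uIcc a (c - 1)) := by
    apply ContinuousOn.mul
    · apply ContinuousOn.div continuousOn_const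
      · fun_prop
      · intro u hu; exact ne_of_gt (mul_pos hcm (hpos u hu))
    · apply continuousOn_finset_sum
      intro k _
      apply ContinuousOn.mul continuousOn_const
      apply ContinuousOn.pow
      apply ContinuousOn.log
      · fun_prop
      · intro u hu
        exact ne_of_gt (div_pos (mul_pos hcm (hpos u hu)) ht)
  rw [intervalIntegral.integral_eq_sub_of_hasDerivAt hderiv
    (hcont.intervalIntegrable)]
  have hFa : F a = 0 := by
    have : c ^ m * (1 + a) / t = 1 := by
      simp only [ha]
      field_simp
      ring
    rw [hF]
    simp [this]
  have hFb : F (c - 1) = (t / c ^ m) * ∑ k ∈ Finset.range m,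
      (1 / (Nat.factorial (k + 1) : ℝ)) * (Real.log (c ^ (m + 1) / t)) ^ (k + 1) := by
    have : c ^ m * (1 + (c - 1)) / t = c ^ (m + 1) / t := by ring_nf
    simp only [hF]
    rw [this]
  rw [hFa, hFb, sub_zero]




lemma claimA {Ω : Type*} [MeasurableSpace Ω] (ℙ : Measure Ω) [IsProbabilityMeasure ℙ]
    {n : ℕ} (Xmax : ℝ) (hX : 0 < Xmax) (X : Fin n → Ω → ℝ)
    (hmeas : ∀ k, Measurable (X k))
    (hunif : ∀ k, Measure.map (X k) ℙ = ProbabilityTheory.cond volume (Set.Icc (-1) Xmax))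
    (s : Finset (Fin n)) (t : ℝ) (ht : (1 + Xmax) ^ s.card ≤ t) :
    ℙ {ω | ∏ k ∈ s, (1 + X k ω) ≤ t} = 1 := by
  have hvol : (volume (Set.Icc (-1:ℝ) Xmax)) = ENNReal.ofReal (1 + Xmax) := by
    rw [Real.volume_Icc]; congr 1; ring
  have hvne : volume (Set.Icc (-1:ℝ) Xmax) ≠ 0 := by
    rw [hvol]; simp [ENNReal.ofReal_eq_zero]; linarith
  have hIcc : ∀ k, ∀ᵐ ω ∂ℙ, X k ω ∈ Set.Icc (-1) Xmax := by
    intro k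
    have h1 : ℙ (X k ⁻¹' Set.Icc (-1) Xmax) = 1 := by
      rw [← Measure.map_apply (hmeas k) measurableSet_Icc, hunif k,
        ProbabilityTheory.cond_apply measurableSet_Icc, Set.inter_self,
        ENNReal.inv_mul_cancel hvne (by rw [hvol]; exact ENNReal.ofReal_ne_top)]
    have h2 : ℙ (X k ⁻¹' Set.Icc (-1) Xmax)ᶜ = 0 := by
      rw [measure_compl (measurableSet_Icc.preimage (hmeas k)) (measure_ne_top ℙ _), h1,
        measure_univ, tsub_self]
    rw [ae_iff]
    convert h2 using 2
    rfl
  have hall : ∀ᵐ ω ∂ℙ, ∀ k, X k ω ∈ Set.Icc (-1) Xmax := ae_all_iff.2 hIcc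
  have hsub : ∀ᵐ ω ∂ℙ, ω ∈ {ω | ∏ k ∈ s, (1 + X k ω) ≤ t} := by
    filter_upwards [hall] with ω hω
    have h1 : ∏ k ∈ s, (1 + X k ω) ≤ ∏ _k ∈ s, (1 + Xmax) := by
      apply Finset.prod_le_prod
      · intro i _; have := (hω i).1; linarith
      · intro i _; have := (hω i).2; linarith
    calc ∏ k ∈ s, (1 + X k ω) ≤ ∏ _k ∈ s, (1 + Xmax) := h1
      _ = (1 + Xmax) ^ s.card := by rw [Finset.prod_const]
      _ ≤ t := ht
  calc ℙ {ω | ∏ k ∈ s, (1 + X k ω) ≤ t} = ℙ Set.univ :=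
        measure_congr (Filter.eventuallyEq_univ.2 hsub)
    _ = 1 := measure_univ




lemma claimB {Ω : Type*} [MeasurableSpace Ω] (ℙ : Measure Ω) [IsProbabilityMeasure ℙ]
    {n : ℕ} (Xmax : ℝ) (hX : 0 < Xmax) (X : Fin n → Ω → ℝ)
    (hmeas : ∀ k, Measurable (X k))
    (hindep : ProbabilityTheory.iIndepFun X ℙ)
    (hunif : ∀ k, Measure.map (X k) ℙ = ProbabilityTheory.cond volume (Set.Icc (-1) Xmax))
    (s : Finset (Fin n)) :
    ∀ t : ℝ, 0 < t → t < (1 + Xmax) ^ s.card →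
      ℙ {ω | ∏ k ∈ s, (1 + X k ω) ≤ t} =
        ENNReal.ofReal ((t / (1 + Xmax) ^ s.card) * ∑ k ∈ Finset.range s.card,
          (1 / (Nat.factorial k : ℝ)) * (Real.log ((1 + Xmax) ^ s.card / t)) ^ k) := by
  classical
  induction s using Finset.induction_on with
  | empty =>
      intro t ht htc
      simp only [Finset.card_empty, pow_zero] at htc
      have he : {ω : Ω | ∏ k ∈ (∅ : Finset (Fin n)), (1 + X k ω) ≤ t} = ∅ := by
        ext ω
        simp only [Finset.prod_empty, Set.mem_setOf_eq, Set.mem_empty_iff_false, iff_false,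
          not_le]
        linarith
      rw [he]
      simp
  | @insert i s hi ih =>
      intro t ht htc
      have hc1 : (1:ℝ) < 1 + Xmax := by linarith
      have hc0 : (0:ℝ) < 1 + Xmax := by linarith
      set c := 1 + Xmax with hc
      set m := s.card with hm
      have hcard : (insert i s).card = m + 1 := Finset.card_insert_of_notMem hi
      rw [hcard] at htc ⊢
      have hcm : (0:ℝ) < c ^ m := pow_pos hc0 m
      have hcm1 : (0:ℝ) < c ^ (m + 1) := pow_pos hc0 (m + 1)
      -- the product over s
      set P := fun ω => ∏ j ∈ s, (1 + X j ω) with hP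
      have hPmeas : Measurable P :=
        Finset.measurable_prod s (fun j _ => measurable_const.add (hmeas j))
      -- independence of X i and P
      have hIF : ProbabilityTheory.IndepFun (X i) P ℙ := by
        set g : Fin n → ℝ → ℝ := fun j => if j = i then id else fun x => 1 + x with hg
        have hgm : ∀ j, Measurable (g j) := by
          intro j
          by_cases h : j = i
          · simp only [hg, if_pos h]; exact measurable_id
          · simp only [hg, if_neg h]; fun_prop
        have hindep2 : ProbabilityTheory.iIndepFun
            (fun j => g j ∘ X j) ℙ := hindep.comp g hgm
        have hIF0 := hindep2.indepFun_finset_prod_of_notMem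
          (fun j => (hgm j).comp (hmeas j)) hi
        have h1 : (g i ∘ X i) = X i := by
          funext ω; simp [hg]
        have h2 : (∏ j ∈ s, (g j ∘ X j)) = P := by
          funext ω
          rw [Finset.prod_apply]
          apply Finset.prod_congr rfl
          intro j hj
          have : j ≠ i := fun h => hi (h ▸ hj)
          simp [hg, this]
        rw [h1, h2] at hIF0
        exact hIF0.symm
      have hmapPprob : IsProbabilityMeasure (Measure.map P ℙ) :=
        Measure.isProbabilityMeasure_map hPmeas.aemeasurable
      have hmap : Measure.map (fun ω => (X i ω, P ω)) ℙ =
          (Measure.map (X i) ℙ).prod (Measure.map P ℙ) :=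
        (ProbabilityTheory.indepFun_iff_map_prod_eq_prod_map_map (hmeas i).aemeasurable
          hPmeas.aemeasurable).1 hIF
      set A : Set (ℝ × ℝ) := {p | (1 + p.1) * p.2 ≤ t} with hA
      have hAmeas : MeasurableSet A :=
        measurableSet_le ((measurable_fst.const_add 1).mul measurable_snd) measurable_const
      have step1 : ℙ {ω | ∏ k ∈ insert i s, (1 + X k ω) ≤ t} =
          Measure.map (fun ω => (X i ω, P ω)) ℙ A := by
        rw [Measure.map_apply ((hmeas i).prodMk hPmeas) hAmeas]
        congr 1
        ext ω
        simp [hA, Finset.prod_insert hi, hP]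
      set gfun : ℝ → ENNReal := fun u => Measure.map P ℙ {y | (1 + u) * y ≤ t} with hgfun
      have step2 : Measure.map (fun ω => (X i ω, P ω)) ℙ A =
          ∫⁻ u, gfun u ∂(Measure.map (X i) ℙ) := by
        rw [hmap, Measure.prod_apply hAmeas]
        rfl
      have hvol : (volume (Set.Icc (-1:ℝ) Xmax)) = ENNReal.ofReal c := by
        rw [Real.volume_Icc]; congr 1; rw [hc]; ring
      have hmu : Measure.map (X i) ℙ =
          (ENNReal.ofReal c)⁻¹ • volume.restrict (Set.Icc (-1) Xmax) := by
        rw [hunif i, ProbabilityTheory.cond, hvol]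
      set u0 := t / c ^ m - 1 with hu0
      have hu0l : (-1:ℝ) < u0 := by
        have : 0 < t / c ^ m := div_pos ht hcm
        rw [hu0]; linarith
      have htcm : t / c ^ m < c := by
        rw [div_lt_iff₀ hcm]
        calc t < c ^ (m + 1) := htc
          _ = c * c ^ m := by ring
      have hu0r : u0 ≤ Xmax := by
        have : u0 < c - 1 := by rw [hu0]; linarith
        rw [hc] at this; linarith
      have step3 : ∫⁻ u, gfun u ∂(Measure.map (X i) ℙ) =
          (ENNReal.ofReal c)⁻¹ * ((∫⁻ u in Set.Ioc (-1:ℝ) u0, gfun u) +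
            ∫⁻ u in Set.Ioc u0 Xmax, gfun u) := by
        rw [hmu, lintegral_smul_measure]
        congr 1
        rw [← Measure.restrict_congr_set MeasureTheory.Ioc_ae_eq_Icc,
          ← Set.Ioc_union_Ioc_eq_Ioc hu0l.le hu0r,
          lintegral_union measurableSet_Ioc (Set.Ioc_disjoint_Ioc_of_le le_rfl)]
      have hsetle : ∀ u : ℝ, MeasurableSet {y : ℝ | (1 + u) * y ≤ t} :=
        fun u => measurableSet_le (measurable_const.mul measurable_id) measurable_const
      have hgP : ∀ u : ℝ, 0 < 1 + u →
          gfun u = ℙ {ω | ∏ j ∈ s, (1 + X j ω) ≤ t / (1 + u)} := by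
        intro u h1u
        simp only [hgfun]
        rw [Measure.map_apply hPmeas (hsetle u)]
        congr 1
        ext ω
        simp only [Set.mem_preimage, Set.mem_setOf_eq, hP]
        rw [mul_comm, ← le_div_iff₀ h1u]
      have piece1 : (∫⁻ u in Set.Ioc (-1:ℝ) u0, gfun u) = ENNReal.ofReal (t / c ^ m) := by
        have h1 : ∀ u ∈ Set.Ioc (-1:ℝ) u0, gfun u = 1 := by
          intro u hu
          have h1u : 0 < 1 + u := by have := hu.1; linarith
          rw [hgP u h1u]
          apply claimA ℙ Xmax hX X hmeas hunif s
          rw [le_div_iff₀ h1u]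
          have h2 : 1 + u ≤ t / c ^ m := by have := hu.2; rw [hu0] at this; linarith
          calc c ^ m * (1 + u) ≤ c ^ m * (t / c ^ m) :=
                mul_le_mul_of_nonneg_left h2 hcm.le
            _ = t := by field_simp
        rw [setLIntegral_congr_fun measurableSet_Ioc h1, setLIntegral_one,
          Real.volume_Ioc]
        congr 1
        rw [hu0]; ring
      have hXc : Xmax = c - 1 := by rw [hc]; ring
      set G : ℝ → ℝ := fun u => (t / (c ^ m * (1 + u))) * ∑ k ∈ Finset.range m,
          (1 / (Nat.factorial k : ℝ)) * (Real.log (c ^ m * (1 + u) / t)) ^ k with hG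
      have hposIcc : ∀ u ∈ Set.Icc u0 Xmax, 0 < 1 + u := by
        intro u hu; have := hu.1; linarith
      have h2 : ∀ u ∈ Set.Ioc u0 Xmax, gfun u = ENNReal.ofReal (G u) := by
        intro u hu
        have h1u : 0 < 1 + u := by have := hu.1; linarith
        rw [hgP u h1u]
        have ht' : 0 < t / (1 + u) := div_pos ht h1u
        have ht'2 : t / (1 + u) < c ^ m := by
          rw [div_lt_iff₀ h1u]
          have h3 : t / c ^ m < 1 + u := by have := hu.1; rw [hu0] at this; linarith
          calc t = c ^ m * (t / c ^ m) := by field_simp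
            _ < c ^ m * (1 + u) := by exact mul_lt_mul_of_pos_left h3 hcm
        rw [ih (t / (1 + u)) ht' ht'2]
        congr 1
        rw [hG]
        have e1 : t / (1 + u) / c ^ m = t / (c ^ m * (1 + u)) := by
          rw [div_div, mul_comm]
        have e2 : c ^ m / (t / (1 + u)) = c ^ m * (1 + u) / t := div_div_eq_mul_div _ _ _
        rw [e1, e2]
      have hGcont : ContinuousOn G (Set.Icc u0 Xmax) := by
        apply ContinuousOn.mul
        · apply ContinuousOn.div continuousOn_const
          · fun_prop
          · intro u hu; exact ne_of_gt (mul_pos hcm (hposIcc u hu))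
        · apply continuousOn_finset_sum
          intro k _
          apply ContinuousOn.mul continuousOn_const
          apply ContinuousOn.pow
          apply ContinuousOn.log
          · fun_prop
          · intro u hu
            exact ne_of_gt (div_pos (mul_pos hcm (hposIcc u hu)) ht)
      have hint : IntegrableOn G (Set.Ioc u0 Xmax) volume :=
        (hGcont.integrableOn_Icc).mono_set Set.Ioc_subset_Icc_self
      have hGpos : ∀ u ∈ Set.Ioc u0 Xmax, 0 ≤ G u := by
        intro u hu
        have h1u : 0 < 1 + u := by have := hu.1; linarith
        have hlog : 0 ≤ Real.log (c ^ m * (1 + u) / t) := by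
          apply Real.log_nonneg
          rw [le_div_iff₀ ht]
          have h3 : t / c ^ m ≤ 1 + u := by have := hu.1; rw [hu0] at this; linarith
          calc 1 * t = c ^ m * (t / c ^ m) := by field_simp
            _ ≤ c ^ m * (1 + u) := mul_le_mul_of_nonneg_left h3 hcm.le
        rw [hG]
        apply mul_nonneg (div_nonneg ht.le (mul_pos hcm h1u).le)
        apply Finset.sum_nonneg
        intro k _
        exact mul_nonneg (by positivity) (pow_nonneg hlog k)
      have piece2 : (∫⁻ u in Set.Ioc u0 Xmax, gfun u) =
          ENNReal.ofReal ((t / c ^ m) * ∑ k ∈ Finset.range m,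
            (1 / (Nat.factorial (k + 1) : ℝ)) * (Real.log (c ^ (m + 1) / t)) ^ (k + 1)) := by
        rw [setLIntegral_congr_fun measurableSet_Ioc h2,
          ← ofReal_integral_eq_lintegral_ofReal hint
            ((ae_restrict_iff' measurableSet_Ioc).2 (ae_of_all _ hGpos))]
        congr 1
        rw [← intervalIntegral.integral_of_le hu0r]
        rw [hXc]
        exact ftc_piece c t hc1 m ht htc
      have hΛ : 0 ≤ Real.log (c ^ (m + 1) / t) := by
        apply Real.log_nonneg
        rw [le_div_iff₀ ht]; linarith
      have hS2 : 0 ≤ (t / c ^ m) * ∑ k ∈ Finset.range m,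
          (1 / (Nat.factorial (k + 1) : ℝ)) * (Real.log (c ^ (m + 1) / t)) ^ (k + 1) := by
        apply mul_nonneg (div_nonneg ht.le hcm.le)
        apply Finset.sum_nonneg
        intro k _
        exact mul_nonneg (by positivity) (pow_nonneg hΛ _)
      rw [step1, step2, step3, piece1, piece2,
        ← ENNReal.ofReal_add (by positivity) hS2,
        ← ENNReal.div_eq_inv_mul, ← ENNReal.ofReal_div_of_pos hc0]
      congr 1
      rw [Finset.sum_range_succ']
      have hc0' : c ≠ 0 := ne_of_gt hc0
      have hcm' : (c:ℝ) ^ m ≠ 0 := ne_of_gt hcm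
      simp only [Nat.factorial_zero, Nat.cast_one, pow_zero, mul_one]
      field_simp
      ring

/-- CDF of `𝒳ₙ = ∏ (1 + X k) - 1` for i.i.d. uniform `X k` on `[-1, Xmax]`. -/
theorem cdf_prod_uniform
    {Ω : Type*} [MeasurableSpace Ω] (ℙ : Measure Ω) [IsProbabilityMeasure ℙ]
    (n : ℕ) (hn : 1 ≤ n) (Xmax : ℝ) (hX : 0 < Xmax) (X : Fin n → Ω → ℝ)
    (hindep : ProbabilityTheory.iIndepFun X ℙ)
    (hunif : ∀ k, pdf.IsUniform (X k) (Set.Icc (-1) Xmax) ℙ volume) :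
    (∀ z : ℝ, -1 < z → z < (1 + Xmax) ^ n - 1 →
      ℙ {ω | (∏ k, (1 + X k ω)) - 1 ≤ z} =
        ENNReal.ofReal (((1 + z) / (1 + Xmax) ^ n) *
          ∑ k ∈ Finset.range n,
            (1 / (Nat.factorial k : ℝ)) * (Real.log ((1 + Xmax) ^ n / (1 + z))) ^ k)) ∧
    (∀ z : ℝ, z ≤ -1 → ℙ {ω | (∏ k, (1 + X k ω)) - 1 ≤ z} = 0) := by
  have hvol0 : volume (Set.Icc (-1:ℝ) Xmax) = ENNReal.ofReal (1 + Xmax) := by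
    rw [Real.volume_Icc]; congr 1; ring
  have hvne : volume (Set.Icc (-1:ℝ) Xmax) ≠ 0 := by
    rw [hvol0]; simp [ENNReal.ofReal_eq_zero]; linarith
  have hvnt : volume (Set.Icc (-1:ℝ) Xmax) ≠ ⊤ := by
    rw [hvol0]; exact ENNReal.ofReal_ne_top
  have hXae : ∀ k, AEMeasurable (X k) ℙ := fun k => (hunif k).aemeasurable hvne hvnt
  set X' : Fin n → Ω → ℝ := fun k => (hXae k).mk (X k) with hX'
  have hmeas' : ∀ k, Measurable (X' k) := fun k => (hXae k).measurable_mk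
  have heq : ∀ k, X k =ᵐ[ℙ] X' k := fun k => (hXae k).ae_eq_mk
  have hindep' : ProbabilityTheory.iIndepFun X' ℙ :=
    iIndepFun_ae_congr hindep heq
  have hunif' : ∀ k, Measure.map (X' k) ℙ =
      ProbabilityTheory.cond volume (Set.Icc (-1) Xmax) := by
    intro k
    have h1 : Measure.map (X' k) ℙ = Measure.map (X k) ℙ :=
      Measure.map_congr (heq k).symm
    rw [h1]
    exact hunif k
  have hsetcong : ∀ t : ℝ, ℙ {ω | (∏ k, (1 + X k ω)) - 1 ≤ t} =
      ℙ {ω | ∏ k, (1 + X' k ω) ≤ t + 1} := by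
    intro t
    apply measure_congr
    have hall : ∀ᵐ ω ∂ℙ, ∀ k, X k ω = X' k ω := ae_all_iff.2 heq
    rw [Filter.eventuallyEq_set]
    filter_upwards [hall] with ω hω
    rw [show ∏ k, (1 + X k ω) = ∏ k, (1 + X' k ω) from
      Finset.prod_congr rfl (fun k _ => by rw [hω k])]
    exact sub_le_iff_le_add
  constructor
  · intro z hz1 hz2
    rw [hsetcong z]
    have h := claimB ℙ Xmax hX X' hmeas' hindep' hunif' Finset.univ (z + 1)
      (by linarith) (by rw [Finset.card_univ, Fintype.card_fin]; linarith)
    rw [Finset.card_univ, Fintype.card_fin] at h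
    rw [show (1:ℝ) + z = z + 1 from add_comm 1 z]
    exact h
  · intro z hz
    rw [hsetcong z]
    have hgt : ∀ k, ∀ᵐ ω ∂ℙ, -1 < X' k ω := by
      intro k
      have hinter : Set.Icc (-1:ℝ) Xmax ∩ Set.Iic (-1) = {(-1:ℝ)} := by
        ext x
        simp only [Set.mem_inter_iff, Set.mem_Icc, Set.mem_Iic, Set.mem_singleton_iff]
        constructor
        · rintro ⟨⟨h1, _⟩, h3⟩; exact le_antisymm h3 h1
        · intro h; subst h; exact ⟨⟨le_refl _, by linarith⟩, le_refl _⟩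
      have h0 : ℙ (X' k ⁻¹' Set.Iic (-1)) = 0 := by
        rw [← Measure.map_apply (hmeas' k) measurableSet_Iic, hunif' k,
          ProbabilityTheory.cond_apply measurableSet_Icc, hinter]
        simp
      have hset : {ω | ¬ (-1:ℝ) < X' k ω} = X' k ⁻¹' Set.Iic (-1) := by
        ext ω; simp [not_lt]
      rw [ae_iff, hset]
      exact h0
    have hall : ∀ᵐ ω ∂ℙ, ∀ k, -1 < X' k ω := ae_all_iff.2 hgt
    refine measure_mono_null ?_ (ae_iff.1 hall)
    intro ω hω
    simp only [Set.mem_setOf_eq] at hω ⊢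
    intro hcon
    have hpos : 0 < ∏ k, (1 + X' k ω) :=
      Finset.prod_pos (fun k _ => by linarith [hcon k])
    linarith
end

section
/- Let X(0), ..., X(n-1) be i.i.d. uniform random variables on [-1, X_max] with X_max > 0, and 𝒳_n := (∏_{k=0}^{n-1}(1+X(k))) - 1. Then 𝒳_n has a probability density function given by f(z) = (1/((1+X_max)^n · (n-1)!)) · (log((1+X_max)^n/(1+z)))^{n-1} for -1 < z < (1+X_max)^n - 1, and f(z) = 0 otherwise. -/
open MeasureTheory Real



lemma ftc_log_pow (k : ℕ) (B a : ℝ) (ha : 0 < a) (hab : a ≤ B) :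
    ∫ x in a..B, (Real.log (B / x)) ^ k * x⁻¹ =
      (Real.log (B / a)) ^ (k + 1) / (k + 1) := by
  have hB : 0 < B := lt_of_lt_of_le ha hab
  have key : ∀ x ∈ Set.uIcc a B, HasDerivAt (fun y => -(Real.log B - Real.log y) ^ (k+1) / (k+1))
      ((Real.log (B / x)) ^ k * x⁻¹) x := by
    intro x hx
    rw [Set.uIcc_of_le hab] at hx
    have hx0 : 0 < x := lt_of_lt_of_le ha hx.1
    have h1 : HasDerivAt (fun y => Real.log B - Real.log y) (-x⁻¹) x := by
      simpa using ((Real.hasDerivAt_log hx0.ne').const_sub (Real.log B))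
    have h2 : HasDerivAt (fun y => (Real.log B - Real.log y) ^ (k+1))
        ((k+1) * (Real.log B - Real.log x) ^ k * (-x⁻¹)) x := by
      have := h1.fun_pow (k+1)
      simpa using this
    have h3 : HasDerivAt (fun y => -((Real.log B - Real.log y) ^ (k+1) / ((k:ℝ)+1)))
        (-(((k:ℝ)+1) * (Real.log B - Real.log x) ^ k * (-x⁻¹) / ((k:ℝ)+1))) x :=
      (h2.div_const ((k:ℝ)+1)).fun_neg
    convert h3 using 1
    · ext y; ring
    · rw [Real.log_div hB.ne' hx0.ne']
      field_simp
  have hcont : ContinuousOn (fun x => (Real.log (B / x)) ^ k * x⁻¹) (Set.uIcc a B) := by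
    rw [Set.uIcc_of_le hab]
    have : ∀ x ∈ Set.Icc a B, x ≠ 0 := fun x hx => (lt_of_lt_of_le ha hx.1).ne'
    exact ((continuousOn_const.div continuousOn_id (fun x hx => this x hx)).log
      (fun x hx => (div_pos hB (lt_of_lt_of_le ha hx.1)).ne')).pow k |>.mul
      (continuousOn_id.inv₀ (fun x hx => this x hx))
  have := intervalIntegral.integral_eq_sub_of_hasDerivAt key (hcont.intervalIntegrable)
  rw [this]
  rw [Real.log_div hB.ne' ha.ne']
  simp [sub_self]
  ring

noncomputable def dens (c : ℝ) (m : ℕ) (t : ℝ) : ENNReal :=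
  ENNReal.ofReal (if 0 < t ∧ t < c ^ m then
    (1 / (c ^ m * (Nat.factorial (m - 1) : ℝ))) * (Real.log (c ^ m / t)) ^ (m - 1) else 0)

lemma dens_measurable (c : ℝ) (m : ℕ) : Measurable (dens c m) := by
  apply ENNReal.measurable_ofReal.comp
  have hset : MeasurableSet {t : ℝ | 0 < t ∧ t < c ^ m} := by
    have : {t : ℝ | 0 < t ∧ t < c ^ m} = Set.Ioo 0 (c ^ m) := rfl
    rw [this]; exact measurableSet_Ioo
  exact Measurable.ite hset
    ((measurable_const.mul (((measurable_const.div measurable_id).log).pow_const _)))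
    measurable_const

lemma dens_nonneg_arg (c : ℝ) (hc : 0 < c) (m : ℕ) (t : ℝ) :
    0 ≤ (if 0 < t ∧ t < c ^ m then
      (1 / (c ^ m * (Nat.factorial (m - 1) : ℝ))) * (Real.log (c ^ m / t)) ^ (m - 1) else 0) := by
  split_ifs with h
  · apply mul_nonneg
    · positivity
    · apply pow_nonneg
      apply Real.log_nonneg
      rw [le_div_iff₀ h.1]
      simpa using h.2.le
  · exact le_refl 0

lemma inner_eq (c : ℝ) (hc : 0 < c) (k : ℕ) (t : ℝ) :
    ∫⁻ x, dens c (k+1) x * (if 0 < t ∧ t < x * c then ENNReal.ofReal ((x*c)⁻¹) else 0) =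
      dens c (k+2) t := by
  have hck1 : (0:ℝ) < c ^ (k+1) := pow_pos hc _
  have hck2 : (0:ℝ) < c ^ (k+2) := pow_pos hc _
  by_cases ht : 0 < t ∧ t < c ^ (k+2)
  · set a := t / c with ha_def
    set B := c ^ (k+1) with hB_def
    have ha : 0 < a := div_pos ht.1 hc
    have hab : a ≤ B := by
      rw [ha_def, div_le_iff₀ hc, hB_def]
      have hpow : c ^ (k+2) = c ^ (k+1) * c := by ring
      linarith [ht.2]
    set C := (1 / (c ^ (k+1) * (Nat.factorial k : ℝ))) with hC_def
    have hC : 0 ≤ C := by positivity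
    have hptw : ∀ x, dens c (k+1) x * (if 0 < t ∧ t < x * c then ENNReal.ofReal ((x*c)⁻¹) else 0)
        = (Set.Ioo a B).indicator
            (fun x => ENNReal.ofReal (C * (Real.log (B / x)) ^ k * (x*c)⁻¹)) x := by
      intro x
      by_cases hx : x ∈ Set.Ioo a B
      · rw [Set.indicator_of_mem hx]
        obtain ⟨hx1, hx2⟩ := hx
        have hx0 : 0 < x := lt_trans ha hx1
        have htx : t < x * c := by
          rw [ha_def, div_lt_iff₀ hc] at hx1; linarith
        rw [dens, if_pos ⟨hx0, by simpa using hx2⟩, if_pos ⟨ht.1, htx⟩]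
        rw [← ENNReal.ofReal_mul (by
          apply mul_nonneg (by positivity)
          apply pow_nonneg (Real.log_nonneg _) _
          rw [le_div_iff₀ hx0]; simpa using hx2.le)]
        simp only [Nat.add_sub_cancel]
        rfl
      · rw [Set.indicator_of_notMem hx]
        simp only [Set.mem_Ioo, not_and_or, not_lt] at hx
        rcases hx with hx | hx
        · -- x ≤ a = t/c, so x * c ≤ t
          have : ¬ (0 < t ∧ t < x * c) := by
            rintro ⟨ht0, htx⟩
            have : x * c ≤ t := by
              rw [ha_def, le_div_iff₀ hc] at hx
              -- hx : x * c ≤ t? hx : x ≤ t / c gives x * c ≤ t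
              linarith
            linarith
          rw [if_neg this, mul_zero]
        · -- B ≤ x
          rw [dens, if_neg (by
            rintro ⟨_, h2⟩
            exact absurd h2 (not_lt.2 hx)), ENNReal.ofReal_zero, zero_mul]
    rw [lintegral_congr hptw, lintegral_indicator measurableSet_Ioo _]
    have hg_nonneg : ∀ x ∈ Set.Ioo a B, 0 ≤ C * (Real.log (B / x)) ^ k * (x*c)⁻¹ := by
      intro x hx
      have hx0 : 0 < x := lt_trans ha hx.1
      apply mul_nonneg (mul_nonneg hC (pow_nonneg (Real.log_nonneg (by
        rw [le_div_iff₀ hx0]; simpa using hx.2.le)) _))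
      positivity
    have hcont : ContinuousOn (fun x => C * (Real.log (B / x)) ^ k * (x*c)⁻¹) (Set.Icc a B) := by
      have hne : ∀ x ∈ Set.Icc a B, x ≠ 0 := fun x hx => (lt_of_lt_of_le ha hx.1).ne'
      apply ContinuousOn.mul
      · exact continuousOn_const.mul
          (((continuousOn_const.div continuousOn_id hne).log
            (fun x hx => (div_pos hck1 (lt_of_lt_of_le ha hx.1)).ne')).pow k)
      · exact (continuousOn_id.mul continuousOn_const).inv₀
          (fun x hx => (mul_pos (lt_of_lt_of_le ha hx.1) hc).ne')
    have hint : IntegrableOn (fun x => C * (Real.log (B / x)) ^ k * (x*c)⁻¹) (Set.Ioo a B) := by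
      exact (hcont.integrableOn_Icc).mono_set Set.Ioo_subset_Icc_self
    rw [← ofReal_integral_eq_lintegral_ofReal hint
      ((ae_restrict_iff' measurableSet_Ioo).2 (Filter.Eventually.of_forall hg_nonneg))]
    have : ∫ x in Set.Ioo a B, C * (Real.log (B / x)) ^ k * (x*c)⁻¹ =
        ∫ x in a..B, C * (Real.log (B / x)) ^ k * (x*c)⁻¹ := by
      rw [intervalIntegral.integral_of_le hab, integral_Ioc_eq_integral_Ioo]
    rw [this]
    have heq : ∀ x : ℝ, C * (Real.log (B / x)) ^ k * (x*c)⁻¹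
        = (C * c⁻¹) * ((Real.log (B / x)) ^ k * x⁻¹) := by
      intro x; rw [mul_inv]; ring
    simp_rw [heq]
    rw [intervalIntegral.integral_const_mul, ftc_log_pow k B a ha hab]
    rw [dens, if_pos ht]
    have hBa : B / a = c ^ (k+2) / t := by
      rw [hB_def, ha_def]
      field_simp
      ring
    rw [hBa]
    have hf0 : ((Nat.factorial k : ℕ) : ℝ) ≠ 0 := Nat.cast_ne_zero.mpr (Nat.factorial_ne_zero k)
    have hk1 : ((k:ℝ)+1) ≠ 0 := by positivity
    have hkey : C * c⁻¹ * (Real.log (c ^ (k+2) / t) ^ (k+1) / ((k:ℝ)+1)) =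
        (1 / (c ^ (k+2) * (Nat.factorial (k+2-1) : ℝ))) * (Real.log (c ^ (k+2) / t)) ^ (k+2-1) := by
      have h1 : k+2-1 = k+1 := rfl
      rw [h1, hC_def, Nat.factorial_succ]
      generalize Real.log (c ^ (k+2) / t) = L
      push_cast
      field_simp
      ring
    exact congrArg ENNReal.ofReal hkey
  · rw [dens, if_neg ht, ENNReal.ofReal_zero]
    have hz : ∀ x:ℝ, dens c (k+1) x *
        (if 0 < t ∧ t < x * c then ENNReal.ofReal ((x*c)⁻¹) else 0) = 0 := by
      intro x
      by_cases ht0 : 0 < t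
      · by_cases hx : 0 < x ∧ x < c ^ (k+1)
        · have : ¬ (0 < t ∧ t < x * c) := by
            rintro ⟨_, htx⟩
            apply ht
            refine ⟨ht0, lt_of_lt_of_le htx ?_⟩
            calc x * c ≤ c ^ (k+1) * c := by nlinarith [hx.2, hc]
              _ = c ^ (k+2) := by ring
          rw [if_neg this, mul_zero]
        · rw [dens, if_neg (by simpa using hx), ENNReal.ofReal_zero, zero_mul]
      · rw [if_neg (fun h => ht0 h.1), mul_zero]
    rw [lintegral_congr hz, lintegral_zero]

lemma dens_def (c : ℝ) (m : ℕ) (t : ℝ) : dens c m t =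
  ENNReal.ofReal (if 0 < t ∧ t < c ^ m then
    (1 / (c ^ m * (Nat.factorial (m - 1) : ℝ))) * (Real.log (c ^ m / t)) ^ (m - 1) else 0) := rfl

lemma dens_one_eq (c : ℝ) (y : ℝ) :
    dens c 1 y = ENNReal.ofReal (if 0 < y ∧ y < c then c⁻¹ else 0) := by
  rw [dens_def]
  congr 1
  have hiff : (0 < y ∧ y < c ^ 1) ↔ (0 < y ∧ y < c) := by rw [pow_one]
  split_ifs with h h2 h3
  · simp
  · exact absurd (hiff.mp h) h2
  · exact absurd (hiff.mpr h3) h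
  · rfl

lemma sec_eq (c : ℝ) (hc : 0 < c) {s : Set ℝ} (hs : MeasurableSet s) (x : ℝ) (hx : 0 < x) :
    (volume.withDensity (dens c 1)) ((fun y => x * y) ⁻¹' s) =
      ∫⁻ t, (if 0 < t ∧ t < x * c then ENNReal.ofReal ((x*c)⁻¹) else 0) * s.indicator 1 t := by
  have hxs : MeasurableSet ((fun y => x * y) ⁻¹' s) := (measurable_const_mul x) hs
  rw [withDensity_apply _ hxs, ← lintegral_indicator hxs]
  set G : ℝ → ENNReal := fun z => dens c 1 (x⁻¹ * z) * s.indicator 1 z with hG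
  have hGmeas : Measurable G :=
    ((dens_measurable c 1).comp (measurable_const_mul x⁻¹)).mul
      (measurable_one.indicator hs)
  have h1 : ∀ y, ((fun y => x * y) ⁻¹' s).indicator (dens c 1) y = G (x * y) := by
    intro y
    simp only [hG]
    have hxy : x⁻¹ * (x * y) = y := by field_simp
    rw [hxy]
    by_cases hy : y ∈ (fun y => x * y) ⁻¹' s
    · rw [Set.indicator_of_mem hy, Set.indicator_of_mem (by exact hy), Pi.one_apply, mul_one]
    · rw [Set.indicator_of_notMem hy, Set.indicator_of_notMem (by exact hy), mul_zero]
  rw [lintegral_congr h1]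
  have h2 : ∫⁻ y, G (x * y) = ∫⁻ z, G z ∂(Measure.map (fun y => x * y) volume) :=
    (lintegral_map hGmeas (measurable_const_mul x)).symm
  rw [h2, Real.map_volume_mul_left hx.ne', lintegral_smul_measure]
  rw [smul_eq_mul, ← lintegral_const_mul _ hGmeas]
  apply lintegral_congr
  intro z
  simp only [hG, dens_one_eq]
  have habs : |x⁻¹| = x⁻¹ := abs_of_pos (by positivity)
  rw [habs]
  by_cases hcond : 0 < z ∧ z < x * c
  · have : 0 < x⁻¹ * z ∧ x⁻¹ * z < c := by
      constructor
      · exact mul_pos (inv_pos.mpr hx) hcond.1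
      · rw [inv_mul_lt_iff₀ hx]; exact hcond.2
    rw [if_pos this, if_pos hcond, ← mul_assoc,
      ← ENNReal.ofReal_mul (by positivity : (0:ℝ) ≤ x⁻¹), mul_inv]
  · have : ¬ (0 < x⁻¹ * z ∧ x⁻¹ * z < c) := by
      rintro ⟨h1', h2'⟩
      apply hcond
      constructor
      · nlinarith [inv_pos.mpr hx]
      · rw [inv_mul_lt_iff₀ hx] at h2'; exact h2'
    rw [if_neg this, if_neg hcond]
    simp

lemma step_meas (c : ℝ) (hc : 0 < c) (k : ℕ) :
    Measure.map (fun p : ℝ × ℝ => p.1 * p.2)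
      ((volume.withDensity (dens c (k+1))).prod (volume.withDensity (dens c 1))) =
    volume.withDensity (dens c (k+2)) := by
  ext s hs
  rw [Measure.map_apply measurable_mul hs, Measure.prod_apply (measurable_mul hs)]
  set ν := volume.withDensity (dens c 1) with hν
  have hsec_meas : Measurable fun x : ℝ =>
      ν (Prod.mk x ⁻¹' ((fun p : ℝ × ℝ => p.1 * p.2) ⁻¹' s)) :=
    measurable_measure_prodMk_left (measurable_mul hs)
  rw [lintegral_withDensity_eq_lintegral_mul volume (dens_measurable c (k+1)) hsec_meas]
  have hptw : ∀ x : ℝ, (dens c (k+1) * fun x => ν (Prod.mk x ⁻¹' ((fun p : ℝ×ℝ => p.1*p.2) ⁻¹' s))) x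
      = ∫⁻ t, dens c (k+1) x *
          ((if 0 < t ∧ t < x * c then ENNReal.ofReal ((x*c)⁻¹) else 0) * s.indicator 1 t) := by
    intro x
    simp only [Pi.mul_apply]
    have hpre : Prod.mk x ⁻¹' ((fun p : ℝ×ℝ => p.1*p.2) ⁻¹' s) = (fun y => x * y) ⁻¹' s := rfl
    rw [hpre]
    by_cases hx : 0 < x
    · rw [sec_eq c hc hs x hx, ← lintegral_const_mul]
      exact ((measurable_const.ite
        ((measurableSet_lt measurable_const measurable_id).inter
          (measurableSet_lt measurable_id measurable_const)) measurable_const).mul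
        (measurable_one.indicator hs))
    · have hdx : dens c (k+1) x = 0 := by
        rw [dens_def, if_neg (fun h => hx h.1), ENNReal.ofReal_zero]
      rw [hdx]
      simp
  rw [lintegral_congr hptw]
  have hmeas2 : AEMeasurable (Function.uncurry fun x t : ℝ => dens c (k+1) x *
      ((if 0 < t ∧ t < x * c then ENNReal.ofReal ((x*c)⁻¹) else 0) * s.indicator 1 t))
      (volume.prod volume) := by
    apply Measurable.aemeasurable
    apply Measurable.mul
    · exact (dens_measurable c (k+1)).comp measurable_fst
    · apply Measurable.mul
      · apply Measurable.ite
        · exact ((measurableSet_lt measurable_const measurable_snd).inter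
            (measurableSet_lt measurable_snd (measurable_fst.mul measurable_const)))
        · exact (ENNReal.measurable_ofReal.comp ((measurable_fst.mul measurable_const).inv))
        · exact measurable_const
      · exact (measurable_one.indicator hs).comp measurable_snd
  rw [lintegral_lintegral_swap hmeas2]
  have hptw2 : ∀ t : ℝ, (∫⁻ x, dens c (k+1) x *
      ((if 0 < t ∧ t < x * c then ENNReal.ofReal ((x*c)⁻¹) else 0) * s.indicator 1 t))
      = s.indicator (dens c (k+2)) t := by
    intro t
    have : ∀ x : ℝ, dens c (k+1) x *
        ((if 0 < t ∧ t < x * c then ENNReal.ofReal ((x*c)⁻¹) else 0) * s.indicator 1 t)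
        = (dens c (k+1) x * (if 0 < t ∧ t < x * c then ENNReal.ofReal ((x*c)⁻¹) else 0))
          * s.indicator 1 t := by
      intro x; ring
    rw [lintegral_congr this]
    have hm : Measurable (fun x : ℝ => dens c (k+1) x *
        (if 0 < t ∧ t < x * c then ENNReal.ofReal ((x*c)⁻¹) else 0)) := by
      apply (dens_measurable c (k+1)).mul
      apply Measurable.ite
      · exact (MeasurableSet.const (0 < t)).inter
          (measurableSet_lt measurable_const (measurable_id.mul_const c))
      · exact ENNReal.measurable_ofReal.comp ((measurable_id.mul_const c).inv)
      · exact measurable_const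
    rw [lintegral_mul_const'' _ hm.aemeasurable]
    rw [inner_eq c hc k t]
    by_cases hts : t ∈ s
    · rw [Set.indicator_of_mem hts, Set.indicator_of_mem hts, Pi.one_apply, mul_one]
    · rw [Set.indicator_of_notMem hts, Set.indicator_of_notMem hts, mul_zero]
  rw [lintegral_congr hptw2, lintegral_indicator hs, withDensity_apply _ hs]

lemma unif_withDensity (c : ℝ) (hc : 0 < c) :
    volume.withDensity (dens c 1) = (ENNReal.ofReal c)⁻¹ • volume.restrict (Set.Ioo 0 c) := by
  have h1 : dens c 1 = (Set.Ioo 0 c).indicator (fun _ => ENNReal.ofReal c⁻¹) := by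
    funext y
    rw [dens_one_eq]
    by_cases hy : y ∈ Set.Ioo 0 c
    · rw [Set.indicator_of_mem hy, if_pos ⟨hy.1, hy.2⟩]
    · rw [Set.indicator_of_notMem hy, if_neg (by simpa [Set.mem_Ioo] using hy),
        ENNReal.ofReal_zero]
  rw [h1, withDensity_indicator measurableSet_Ioo, withDensity_const,
    ENNReal.ofReal_inv_of_pos hc]

lemma map_shift_uniform {Ω : Type*} [MeasurableSpace Ω] (ℙ : Measure Ω) (Xmax : ℝ)
    (hX : 0 < Xmax) (X : Ω → ℝ) (hm : Measurable X)
    (hu : pdf.IsUniform X (Set.Icc (-1) Xmax) ℙ volume) :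
    Measure.map (fun ω => 1 + X ω) ℙ = volume.withDensity (dens (1 + Xmax) 1) := by
  set c := 1 + Xmax with hc_def
  have hc : 0 < c := by positivity
  have h1 : (fun ω => 1 + X ω) = (fun x : ℝ => 1 + x) ∘ X := rfl
  rw [h1, ← Measure.map_map (measurable_const_add 1) hm, hu]
  rw [unif_withDensity c hc]
  unfold ProbabilityTheory.cond
  rw [Measure.map_smul]
  have hIcc : volume (Set.Icc (-1 : ℝ) Xmax) = ENNReal.ofReal c := by
    rw [Real.volume_Icc]; congr 1; rw [hc_def]; ring
  rw [hIcc]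
  congr 1
  -- map (1 + ·) (volume.restrict (Icc (-1) Xmax)) = volume.restrict (Ioo 0 c)
  have hIoo : volume.restrict (Set.Ioo (0:ℝ) c) = volume.restrict (Set.Icc (0:ℝ) c) :=
    Measure.restrict_congr_set MeasureTheory.Ioo_ae_eq_Icc
  rw [hIoo]
  ext A hA
  rw [Measure.map_apply (measurable_const_add 1) hA,
    Measure.restrict_apply ((measurable_const_add 1) hA), Measure.restrict_apply hA]
  have hpre : (fun x : ℝ => 1 + x) ⁻¹' A ∩ Set.Icc (-1) Xmax
      = (fun x : ℝ => 1 + x) ⁻¹' (A ∩ Set.Icc 0 c) := by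
    ext x
    simp only [Set.mem_inter_iff, Set.mem_preimage, Set.mem_Icc, hc_def]
    constructor
    · rintro ⟨h1', h2', h3'⟩; exact ⟨h1', by linarith, by linarith⟩
    · rintro ⟨h1', h2', h3'⟩; exact ⟨h1', by linarith, by linarith⟩
  rw [hpre]
  exact (measurePreserving_add_left volume (1:ℝ)).measure_preimage
    ((hA.inter measurableSet_Icc).nullMeasurableSet)

/-- Density of `𝒳ₙ = ∏ (1 + X k) - 1` for i.i.d. uniform `X k` on `[-1, Xmax]`. -/
theorem pdf_prod_uniform
    {Ω : Type*} [MeasurableSpace Ω] (ℙ : Measure Ω) [IsProbabilityMeasure ℙ]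
    (n : ℕ) (hn : 1 ≤ n) (Xmax : ℝ) (hX : 0 < Xmax) (X : Fin n → Ω → ℝ)
    (hmeas : ∀ k, Measurable (X k))
    (hindep : ProbabilityTheory.iIndepFun X ℙ)
    (hunif : ∀ k, pdf.IsUniform (X k) (Set.Icc (-1) Xmax) ℙ volume) :
    Measure.map (fun ω => (∏ k, (1 + X k ω)) - 1) ℙ =
      volume.withDensity (fun z => ENNReal.ofReal
        (if -1 < z ∧ z < (1 + Xmax) ^ n - 1 then
          (1 / ((1 + Xmax) ^ n * (Nat.factorial (n - 1) : ℝ))) *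
            (Real.log ((1 + Xmax) ^ n / (1 + z))) ^ (n - 1)
        else 0)) := by
  set c := 1 + Xmax with hc_def
  have hc : 0 < c := by positivity
  set Y : Fin n → Ω → ℝ := fun k ω => 1 + X k ω with hY_def
  have hYmeas : ∀ k, Measurable (Y k) := fun k => measurable_const.add (hmeas k)
  have hYindep : ProbabilityTheory.iIndepFun Y ℙ :=
    hindep.comp (fun _ => fun x : ℝ => 1 + x) (fun _ => measurable_const_add 1)
  -- induction
  have Hind : ∀ m : ℕ, 1 ≤ m → m ≤ n →
      Measure.map (fun ω => ∏ k ∈ Finset.univ.filter (fun k : Fin n => (k : ℕ) < m), Y k ω) ℙ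
        = volume.withDensity (dens c m) := by
    intro m hm1
    induction m, hm1 using Nat.le_induction with
    | base =>
      intro h1n
      have hfil : Finset.univ.filter (fun k : Fin n => (k : ℕ) < 1) = {(⟨0, h1n⟩ : Fin n)} := by
        ext k
        simp [Nat.lt_one_iff, Fin.ext_iff]
      rw [hfil]
      simp only [Finset.prod_singleton]
      exact map_shift_uniform ℙ Xmax hX (X ⟨0, h1n⟩) (hmeas _) (hunif _)
    | succ m hm1 ih =>
      intro hmn
      have hmn' : m ≤ n := le_of_lt (Nat.lt_of_succ_le hmn)
      have hm_lt : m < n := Nat.lt_of_succ_le hmn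
      set i : Fin n := ⟨m, hm_lt⟩ with hi_def
      set s : Finset (Fin n) := Finset.univ.filter (fun k : Fin n => (k : ℕ) < m) with hs_def
      have hi_not : i ∉ s := by simp [hs_def, hi_def]
      have hfil : Finset.univ.filter (fun k : Fin n => (k : ℕ) < m + 1) = insert i s := by
        ext k
        simp only [Finset.mem_filter, Finset.mem_univ, true_and, Finset.mem_insert, hs_def,
          hi_def, Fin.ext_iff]
        omega
      rw [hfil]
      have hprod : (fun ω => ∏ k ∈ insert i s, Y k ω)
          = fun ω => (∏ k ∈ s, Y k ω) * Y i ω := by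
        funext ω
        rw [Finset.prod_insert hi_not]
        ring
      rw [hprod]
      set F : Ω → ℝ := fun ω => ∏ k ∈ s, Y k ω with hF_def
      have hFmeas : Measurable F := Finset.measurable_prod s (fun k _ => hYmeas k)
      have hFG : ProbabilityTheory.IndepFun F (Y i) ℙ := by
        have := hYindep.indepFun_finsetProd_of_notMem hYmeas hi_not
        have hfn : (∏ j ∈ s, Y j) = F := by
          funext ω; rw [hF_def]; simp [Finset.prod_apply]
        rwa [hfn] at this
      have hpair := (ProbabilityTheory.indepFun_iff_map_prod_eq_prod_map_map
        hFmeas.aemeasurable (hYmeas i).aemeasurable).mp hFG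
      have hcomp : (fun ω => F ω * Y i ω)
          = (fun p : ℝ × ℝ => p.1 * p.2) ∘ (fun ω => (F ω, Y i ω)) := rfl
      rw [hcomp, ← Measure.map_map measurable_mul (hFmeas.prodMk (hYmeas i)), hpair,
        ih hmn', map_shift_uniform ℙ Xmax hX (X i) (hmeas i) (hunif i)]
      obtain ⟨k, rfl⟩ : ∃ k, m = k + 1 := ⟨m - 1, by omega⟩
      exact step_meas c hc k
  have hmain := Hind n hn le_rfl
  have hfiln : Finset.univ.filter (fun k : Fin n => (k : ℕ) < n) = Finset.univ := by
    ext k; simp [k.isLt]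
  rw [hfiln] at hmain
  -- shift by -1
  have hPmeas : Measurable (fun ω => ∏ k, Y k ω) :=
    Finset.measurable_prod Finset.univ (fun k _ => hYmeas k)
  have hcomp2 : (fun ω => (∏ k, (1 + X k ω)) - 1)
      = (fun x : ℝ => x - 1) ∘ (fun ω => ∏ k, Y k ω) := rfl
  have hsub : Measurable (fun x : ℝ => x - 1) := measurable_id.sub_const 1
  rw [hcomp2, ← Measure.map_map hsub hPmeas, hmain]
  -- map (· - 1) (withDensity (dens c n)) = withDensity (dens c n (· + 1))
  have hshift : Measure.map (fun x : ℝ => x - 1) (volume.withDensity (dens c n))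
      = volume.withDensity (fun z => dens c n (z + 1)) := by
    ext A hA
    have hA1 : MeasurableSet ((fun x : ℝ => x - 1) ⁻¹' A) := hsub hA
    rw [Measure.map_apply hsub hA,
      withDensity_apply _ hA1, withDensity_apply _ hA,
      ← lintegral_indicator hA1, ← lintegral_indicator hA]
    have hF : Measurable (((fun x : ℝ => x - 1) ⁻¹' A).indicator (dens c n)) :=
      (dens_measurable c n).indicator hA1
    have h2 : ∫⁻ x, ((fun x : ℝ => x - 1) ⁻¹' A).indicator (dens c n) x
        = ∫⁻ z, ((fun x : ℝ => x - 1) ⁻¹' A).indicator (dens c n) (z + 1) := by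
      have hadd : Measurable (fun x : ℝ => x + 1) := measurable_id.add_const 1
      rw [← lintegral_map hF hadd,
        (measurePreserving_add_right volume (1:ℝ)).map_eq]
    rw [h2]
    apply lintegral_congr
    intro z
    by_cases hz : z ∈ A
    · rw [Set.indicator_of_mem (by simp [hz] : z + 1 ∈ (fun x : ℝ => x - 1) ⁻¹' A),
        Set.indicator_of_mem hz]
    · rw [Set.indicator_of_notMem (by simp [hz] : z + 1 ∉ (fun x : ℝ => x - 1) ⁻¹' A),
        Set.indicator_of_notMem hz]
  rw [hshift]
  congr 1
  funext z
  rw [dens_def]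
  have hiff : (0 < 1 + z ∧ 1 + z < c ^ n) ↔ (-1 < z ∧ z < c ^ n - 1) := by
    constructor <;> rintro ⟨h1, h2⟩ <;> constructor <;> linarith
  have harg : z + 1 = 1 + z := by ring
  rw [harg]
  congr 1
  exact if_congr hiff rfl rfl
end

section
/- Consider one riskless asset with zero return and one risky asset with payoff X₂ taking value 1/2 with probability p and -1/2 with probability 1-p, where 1/2 < p < 3/4. Define the log-variance v(K₂) := p·(log(1 + K₂/2))² + (1-p)·(log(1 - K₂/2))² - (p·log(1 + K₂/2) + (1-p)·log(1 - K₂/2))² for K₂ ∈ [0,1). Then the second derivative of v with respect to K₂ equals 16p(1-p)·(2 + K₂·log((2+K₂)/(2-K₂)))/(K₂² - 4)², which is nonnegative; hence v is convex on [0,1). -/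
open Real Set Filter

private lemma hG_deriv (K : ℝ) (hK : K ∈ Set.Ioo (-2:ℝ) 2) :
    HasDerivAt (fun K : ℝ => Real.log (1 + K / 2) - Real.log (1 - K / 2))
      (4 / (4 - K ^ 2)) K := by
  have h1p : (0:ℝ) < 1 + K / 2 := by nlinarith [hK.1]
  have h2p : (0:ℝ) < 1 - K / 2 := by nlinarith [hK.2]
  have d1 : HasDerivAt (fun K : ℝ => 1 + K / 2) (1 / 2) K := by
    simpa using ((hasDerivAt_id K).div_const 2).const_add 1
  have d2 : HasDerivAt (fun K : ℝ => 1 - K / 2) (-(1 / 2)) K := by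
    simpa using ((hasDerivAt_id K).div_const 2).const_sub 1
  have := (d1.log h1p.ne').sub (d2.log h2p.ne')
  refine this.congr_deriv ?_
  have hne1 : (2:ℝ) + K ≠ 0 := by nlinarith
  have hne2 : (2:ℝ) - K ≠ 0 := by nlinarith
  have hne : (4:ℝ) - K ^ 2 ≠ 0 := by nlinarith
  field_simp
  ring

private lemma hf_deriv (p K : ℝ) (hK : K ∈ Set.Ioo (-2:ℝ) 2) :
    HasDerivAt (fun K : ℝ => p * (1 - p) * (Real.log (1 + K / 2) - Real.log (1 - K / 2)) ^ 2)
      (8 * p * (1 - p) * (Real.log (1 + K / 2) - Real.log (1 - K / 2)) / (4 - K ^ 2)) K := by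
  have := (((hG_deriv K hK).pow 2).const_mul (p * (1 - p)))
  refine this.congr_deriv ?_
  have hne : (4:ℝ) - K ^ 2 ≠ 0 := by nlinarith [hK.1, hK.2]
  field_simp
  ring

private lemma hphi_deriv (p K : ℝ) (hK : K ∈ Set.Ioo (-2:ℝ) 2) :
    HasDerivAt (fun K : ℝ =>
        8 * p * (1 - p) * (Real.log (1 + K / 2) - Real.log (1 - K / 2)) / (4 - K ^ 2))
      (16 * p * (1 - p) * (2 + K * (Real.log (1 + K / 2) - Real.log (1 - K / 2)))
        / (4 - K ^ 2) ^ 2) K := by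
  have hne : (4:ℝ) - K ^ 2 ≠ 0 := by nlinarith [hK.1, hK.2]
  have hN : HasDerivAt (fun K : ℝ =>
      8 * p * (1 - p) * (Real.log (1 + K / 2) - Real.log (1 - K / 2)))
      (8 * p * (1 - p) * (4 / (4 - K ^ 2))) K := (hG_deriv K hK).const_mul _
  have hD : HasDerivAt (fun K : ℝ => 4 - K ^ 2) (-(2 * K)) K := by
    simpa using ((hasDerivAt_pow 2 K).const_sub 4)
  have := hN.div hD hne
  refine this.congr_deriv ?_
  field_simp
  ring


/-- Second derivative formula and convexity of the log-variance in the two-point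
betting example. -/
theorem logVariance_second_deriv_and_convex
    (p : ℝ) (hp : 1 / 2 < p) (hp' : p < 3 / 4) :
    (∀ K₂ ∈ Set.Ico (0 : ℝ) 1,
      deriv (deriv (fun K : ℝ =>
        p * (Real.log (1 + K / 2)) ^ 2 + (1 - p) * (Real.log (1 - K / 2)) ^ 2
          - (p * Real.log (1 + K / 2) + (1 - p) * Real.log (1 - K / 2)) ^ 2)) K₂ =
        16 * p * (1 - p) * (2 + K₂ * Real.log ((2 + K₂) / (2 - K₂))) / (K₂ ^ 2 - 4) ^ 2 ∧
      0 ≤ 16 * p * (1 - p) * (2 + K₂ * Real.log ((2 + K₂) / (2 - K₂))) / (K₂ ^ 2 - 4) ^ 2) ∧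
    ConvexOn ℝ (Set.Ico (0 : ℝ) 1) (fun K : ℝ =>
      p * (Real.log (1 + K / 2)) ^ 2 + (1 - p) * (Real.log (1 - K / 2)) ^ 2
        - (p * Real.log (1 + K / 2) + (1 - p) * Real.log (1 - K / 2)) ^ 2) := by
  have hfe : (fun K : ℝ =>
      p * (Real.log (1 + K / 2)) ^ 2 + (1 - p) * (Real.log (1 - K / 2)) ^ 2
        - (p * Real.log (1 + K / 2) + (1 - p) * Real.log (1 - K / 2)) ^ 2)
      = (fun K : ℝ => p * (1 - p) * (Real.log (1 + K / 2) - Real.log (1 - K / 2)) ^ 2) := by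
    funext K; ring
  rw [hfe]
  set h : ℝ → ℝ := fun K : ℝ => p * (1 - p) * (Real.log (1 + K / 2) - Real.log (1 - K / 2)) ^ 2
    with hh
  have hp0 : 0 < p := by linarith
  have hp1 : 0 < 1 - p := by linarith
  -- deriv h on Ioo (-2) 2
  have hd1 : ∀ K ∈ Set.Ioo (-2:ℝ) 2, deriv h K =
      8 * p * (1 - p) * (Real.log (1 + K / 2) - Real.log (1 - K / 2)) / (4 - K ^ 2) :=
    fun K hK => (hf_deriv p K hK).deriv
  have hd2 : ∀ K₂ ∈ Set.Ioo (-2:ℝ) 2, deriv (deriv h) K₂ =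
      16 * p * (1 - p) * (2 + K₂ * (Real.log (1 + K₂ / 2) - Real.log (1 - K₂ / 2)))
        / (4 - K₂ ^ 2) ^ 2 := by
    intro K₂ hK
    have hev : deriv h =ᶠ[nhds K₂] (fun K : ℝ =>
        8 * p * (1 - p) * (Real.log (1 + K / 2) - Real.log (1 - K / 2)) / (4 - K ^ 2)) :=
      Filter.eventuallyEq_of_mem (isOpen_Ioo.mem_nhds hK) hd1
    rw [hev.deriv_eq]
    exact (hphi_deriv p K₂ hK).deriv
  have hmem : ∀ K₂ ∈ Set.Ico (0:ℝ) 1, K₂ ∈ Set.Ioo (-2:ℝ) 2 := by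
    intro K₂ hK; exact ⟨by linarith [hK.1], by linarith [hK.2]⟩
  have hlog : ∀ K₂ ∈ Set.Ioo (-2:ℝ) 2, Real.log ((2 + K₂) / (2 - K₂)) =
      Real.log (1 + K₂ / 2) - Real.log (1 - K₂ / 2) := by
    intro K₂ hK
    have h1p : (0:ℝ) < 1 + K₂ / 2 := by nlinarith [hK.1]
    have h2p : (0:ℝ) < 1 - K₂ / 2 := by nlinarith [hK.2]
    rw [show (2 + K₂) / (2 - K₂) = (1 + K₂ / 2) / (1 - K₂ / 2) by
      rw [div_eq_div_iff (by linarith) (by linarith)]; ring]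
    exact Real.log_div h1p.ne' h2p.ne'
  have hform : ∀ K₂ ∈ Set.Ico (0:ℝ) 1, deriv (deriv h) K₂ =
      16 * p * (1 - p) * (2 + K₂ * Real.log ((2 + K₂) / (2 - K₂))) / (K₂ ^ 2 - 4) ^ 2 := by
    intro K₂ hK
    rw [hd2 K₂ (hmem K₂ hK), hlog K₂ (hmem K₂ hK), show ((K₂:ℝ) ^ 2 - 4) ^ 2 = (4 - K₂ ^ 2) ^ 2
      by ring]
  have hnonneg : ∀ K₂ ∈ Set.Ico (0:ℝ) 1,
      0 ≤ 16 * p * (1 - p) * (2 + K₂ * Real.log ((2 + K₂) / (2 - K₂))) / (K₂ ^ 2 - 4) ^ 2 := by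
    intro K₂ hK
    have hlognn : 0 ≤ Real.log ((2 + K₂) / (2 - K₂)) := by
      apply Real.log_nonneg
      rw [le_div_iff₀ (by linarith [hK.2])]
      linarith [hK.1]
    have := mul_nonneg hK.1 hlognn
    apply div_nonneg
    · nlinarith [mul_pos hp0 hp1, this]
    · positivity
  refine ⟨fun K₂ hK => ⟨hform K₂ hK, hnonneg K₂ hK⟩, ?_⟩
  have hdAll : ∀ K ∈ Set.Ioo (-2:ℝ) 2, DifferentiableAt ℝ h K :=
    fun K hK => (hf_deriv p K hK).differentiableAt
  apply convexOn_of_deriv2_nonneg (convex_Ico 0 1)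
  · intro x hx
    exact ((hdAll x (hmem x hx)).continuousAt).continuousWithinAt
  · rw [interior_Ico]
    intro x hx
    exact (hdAll x ⟨by linarith [hx.1], by linarith [hx.2]⟩).differentiableWithinAt
  · rw [interior_Ico]
    intro x hx
    have hx2 : x ∈ Set.Ioo (-2:ℝ) 2 := ⟨by linarith [hx.1], by linarith [hx.2]⟩
    have hev : deriv h =ᶠ[nhds x] (fun K : ℝ =>
        8 * p * (1 - p) * (Real.log (1 + K / 2) - Real.log (1 - K / 2)) / (4 - K ^ 2)) :=
      Filter.eventuallyEq_of_mem (isOpen_Ioo.mem_nhds hx2) hd1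
    exact (hev.differentiableAt_iff.mpr (hphi_deriv p x hx2).differentiableAt).differentiableWithinAt
  · rw [interior_Ico]
    intro x hx
    have hx1 : x ∈ Set.Ico (0:ℝ) 1 := ⟨le_of_lt hx.1, hx.2⟩
    simp only [Function.iterate_succ, Function.iterate_zero, Function.comp_apply, id_eq]
    rw [hform x hx1]
    exact hnonneg x hx1
end

section
/- Let X₂ be the two-point random variable with P(X₂ = 1/2) = p and P(X₂ = -1/2) = 1-p, p ∈ (1/2, 3/4), and let ρ ≥ 0. Define h(K₂) := p·log(1+K₂/2) + (1-p)·log(1-K₂/2) - (ρ/2)·[p(log(1+K₂/2))² + (1-p)(log(1-K₂/2))² - (p·log(1+K₂/2)+(1-p)·log(1-K₂/2))²] on [0,1). Then h is concave on [0,1). -/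
open Real Set

private lemma hd_logp (x : ℝ) (hx : x ∈ Set.Ioo (0 : ℝ) 1) :
    HasDerivAt (fun K : ℝ => Real.log (1 + K / 2)) (1 / (2 + x)) x := by
  obtain ⟨hx0, hx1⟩ := hx
  have hinner : HasDerivAt (fun K : ℝ => 1 + K / 2) (1 / 2) x := by
    simpa using ((hasDerivAt_id x).div_const 2).const_add 1
  have hne : 1 + x / 2 ≠ 0 := by nlinarith
  have := hinner.log hne
  convert this using 1
  field_simp

private lemma hd_logm (x : ℝ) (hx : x ∈ Set.Ioo (0 : ℝ) 1) :
    HasDerivAt (fun K : ℝ => Real.log (1 - K / 2)) (-(1 / (2 - x))) x := by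
  obtain ⟨hx0, hx1⟩ := hx
  have hinner : HasDerivAt (fun K : ℝ => 1 - K / 2) (-(1 / 2)) x := by
    simpa using ((hasDerivAt_id x).div_const 2).const_sub 1
  have hne : 1 - x / 2 ≠ 0 := by nlinarith
  have := hinner.log hne
  convert this using 1
  field_simp

private lemma cont_aux : ContinuousOn (fun K : ℝ => Real.log (1 + K / 2))
      (Set.Ico (0 : ℝ) 1) := by
  apply ContinuousOn.log
  · fun_prop
  · intro x hx
    have := hx.1
    nlinarith

private lemma cont_aux' : ContinuousOn (fun K : ℝ => Real.log (1 - K / 2))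
      (Set.Ico (0 : ℝ) 1) := by
  apply ContinuousOn.log
  · fun_prop
  · intro x hx
    have := hx.2
    nlinarith

/-- `K ↦ log(1+K/2) - log(1-K/2)` is convex on `[0,1)`. -/
private lemma u_convex :
    ConvexOn ℝ (Set.Ico (0 : ℝ) 1)
      (fun K : ℝ => Real.log (1 + K / 2) - Real.log (1 - K / 2)) := by
  have hder : ∀ x ∈ Set.Ioo (0 : ℝ) 1,
      HasDerivAt (fun K : ℝ => Real.log (1 + K / 2) - Real.log (1 - K / 2))
        (1 / (2 + x) + 1 / (2 - x)) x := by
    intro x hx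
    have := (hd_logp x hx).sub (hd_logm x hx)
    simpa [sub_neg_eq_add, Pi.sub_def] using this
  refine MonotoneOn.convexOn_of_deriv (convex_Ico 0 1) (cont_aux.sub cont_aux') ?_ ?_
  · rw [interior_Ico]
    intro x hx
    exact (hder x hx).differentiableAt.differentiableWithinAt
  · rw [interior_Ico]
    intro x hx y hy hxy
    rw [(hder x hx).deriv, (hder y hy).deriv]
    have h2x : (0 : ℝ) < 2 + x := by linarith [hx.1]
    have h2y : (0 : ℝ) < 2 - y := by linarith [hy.2]
    have h2y' : (0 : ℝ) < 2 + y := by linarith [hy.1]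
    have h2x' : (0 : ℝ) < 2 - x := by linarith [hx.2]
    have hy4 : (0 : ℝ) < 4 - y ^ 2 := by nlinarith [hy.1, hy.2]
    have hx4 : (0 : ℝ) < 4 - x ^ 2 := by nlinarith [hx.1, hx.2]
    have h1 : 1 / (2 + y) + 1 / (2 - y) = 4 / (4 - y ^ 2) := by
      rw [div_add_div _ _ (ne_of_gt h2y') (ne_of_gt h2y), div_eq_div_iff (by positivity) (ne_of_gt hy4)]
      ring
    have h2 : 1 / (2 + x) + 1 / (2 - x) = 4 / (4 - x ^ 2) := by
      rw [div_add_div _ _ (ne_of_gt h2x) (ne_of_gt h2x'), div_eq_div_iff (by positivity) (ne_of_gt hx4)]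
      ring
    rw [h1, h2]
    have hxy4 : 4 - y ^ 2 ≤ 4 - x ^ 2 := by nlinarith [hx.1, hy.1]
    gcongr

/-- `K ↦ p·log(1+K/2) + (1-p)·log(1-K/2)` is concave on `[0,1)`. -/
private lemma f_concave (p : ℝ) (hp0 : 0 ≤ p) (hp1 : p ≤ 1) :
    ConcaveOn ℝ (Set.Ico (0 : ℝ) 1)
      (fun K : ℝ => p * Real.log (1 + K / 2) + (1 - p) * Real.log (1 - K / 2)) := by
  have hder : ∀ x ∈ Set.Ioo (0 : ℝ) 1,
      HasDerivAt (fun K : ℝ => p * Real.log (1 + K / 2) + (1 - p) * Real.log (1 - K / 2))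
        (p * (1 / (2 + x)) - (1 - p) * (1 / (2 - x))) x := by
    intro x hx
    have := ((hd_logp x hx).const_mul p).add ((hd_logm x hx).const_mul (1 - p))
    simp only [Pi.add_def] at this
    exact this.congr_deriv (by ring)
  refine AntitoneOn.concaveOn_of_deriv (convex_Ico 0 1)
    ((cont_aux.const_smul p).add (cont_aux'.const_smul (1 - p))) ?_ ?_
  · rw [interior_Ico]
    intro x hx
    exact (hder x hx).differentiableAt.differentiableWithinAt
  · rw [interior_Ico]
    intro x hx y hy hxy
    rw [(hder x hx).deriv, (hder y hy).deriv]
    have h2x : (0 : ℝ) < 2 + x := by linarith [hx.1]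
    have h2y : (0 : ℝ) < 2 + y := by linarith [hy.1]
    have h2x' : (0 : ℝ) < 2 - x := by linarith [hx.2]
    have h2y' : (0 : ℝ) < 2 - y := by linarith [hy.2]
    have ha : p * (1 / (2 + y)) ≤ p * (1 / (2 + x)) := by
      apply mul_le_mul_of_nonneg_left _ hp0
      gcongr
    have hb : (1 - p) * (1 / (2 - x)) ≤ (1 - p) * (1 / (2 - y)) := by
      apply mul_le_mul_of_nonneg_left _ (by linarith : (0:ℝ) ≤ 1 - p)
      gcongr
    linarith

/-- The single-stage risk-sensitive objective for the two-point betting model is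
concave on `[0,1)`. -/
theorem risk_sensitive_objective_concave
    (p ρ : ℝ) (hp : 1 / 2 < p) (hp' : p < 3 / 4) (hρ : 0 ≤ ρ) :
    ConcaveOn ℝ (Set.Ico (0 : ℝ) 1) (fun K₂ : ℝ =>
      p * Real.log (1 + K₂ / 2) + (1 - p) * Real.log (1 - K₂ / 2)
        - (ρ / 2) * (p * (Real.log (1 + K₂ / 2)) ^ 2
            + (1 - p) * (Real.log (1 - K₂ / 2)) ^ 2
            - (p * Real.log (1 + K₂ / 2) + (1 - p) * Real.log (1 - K₂ / 2)) ^ 2)) := by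
  set c : ℝ := ρ / 2 * (p * (1 - p)) with hc_def
  have hc : 0 ≤ c := by
    apply mul_nonneg (by linarith)
    apply mul_nonneg (by linarith) (by linarith)
  -- nonnegativity of u on the set
  have hu0 : ∀ x ∈ Set.Ico (0 : ℝ) 1,
      0 ≤ Real.log (1 + x / 2) - Real.log (1 - x / 2) := by
    intro x hx
    have h1 : Real.log (1 - x / 2) ≤ Real.log (1 + x / 2) := by
      apply Real.log_le_log (by nlinarith [hx.2])
      linarith [hx.1]
    linarith
  have hu2 : ConvexOn ℝ (Set.Ico (0 : ℝ) 1)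
      (fun K : ℝ => (Real.log (1 + K / 2) - Real.log (1 - K / 2)) ^ 2) := by
    have := u_convex.pow hu0 2
    simpa [Pi.pow_apply, Pi.pow_def] using this
  have hg : ConvexOn ℝ (Set.Ico (0 : ℝ) 1)
      (fun K : ℝ => c * (Real.log (1 + K / 2) - Real.log (1 - K / 2)) ^ 2) := by
    simpa [smul_eq_mul] using hu2.smul hc
  have hf := f_concave p (by linarith) (by linarith)
  have key := hf.sub hg
  have heq : (fun K₂ : ℝ =>
      p * Real.log (1 + K₂ / 2) + (1 - p) * Real.log (1 - K₂ / 2)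
        - (ρ / 2) * (p * (Real.log (1 + K₂ / 2)) ^ 2
            + (1 - p) * (Real.log (1 - K₂ / 2)) ^ 2
            - (p * Real.log (1 + K₂ / 2) + (1 - p) * Real.log (1 - K₂ / 2)) ^ 2))
      = (fun K : ℝ => p * Real.log (1 + K / 2) + (1 - p) * Real.log (1 - K / 2))
        - (fun K : ℝ => c * (Real.log (1 + K / 2) - Real.log (1 - K / 2)) ^ 2) := by
    funext K
    simp only [Pi.sub_apply, hc_def]
    ring
  rw [heq]
  exact key
end
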